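/- In C[S_n\S_{α+n}/S_n], the element θ_i (1/n! times the sum of delta functions over the double coset S_n·(i, α+1)·S_n, where (i, α+1) is a transposition with i ≤ α) satisfies θ_i² = (n−1)·θ_i + n·1. -/

import Mathlib

open Equiv

noncomputable section

/-- The subgroup `S_n ⊆ S_{α+n}` of permutations fixing `{1,…,α}` pointwise. -/
def fixFirst (α n : ℕ) : Subgroup (Perm (Fin (α + n))) :=
  fixingSubgroup (Perm (Fin (α + n))) {i : Fin (α + n) | (i : ℕ) < α}

/-- The double coset `S_n · t · S_n` in `S_{α+n}`, as a finset. -/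
def dcos (α n : ℕ) (t : Perm (Fin (α + n))) : Finset (Perm (Fin (α + n))) :=
  (Set.toFinite {h | ∃ k₁ ∈ fixFirst α n, ∃ k₂ ∈ fixFirst α n, h = k₁ * t * k₂}).toFinset

/-- `(1/n!)·Σ_{h ∈ S_n t S_n} δ_h` in the group algebra `C[S_{α+n}]`. -/
def dosetElt (α n : ℕ) (t : Perm (Fin (α + n))) : MonoidAlgebra ℂ (Perm (Fin (α + n))) :=
  ((Nat.factorial n : ℂ))⁻¹ • ∑ h ∈ dcos α n t, MonoidAlgebra.single h 1

/-- `θ_i = (1/n!)·Σ_{h ∈ S_n (i,α+1) S_n} δ_h`, where `(i, α+1)` is the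
transposition of `i ≤ α` with `α+1` (0-based: of `i < α` with `α`). -/
def theta (α n : ℕ) (hn : 0 < n) (i : Fin α) : MonoidAlgebra ℂ (Perm (Fin (α + n))) :=
  dosetElt α n (Equiv.swap (Fin.castAdd n i) ⟨α, by omega⟩)

/-- `a(g) = (1/n!)·Σ_{σ ∈ S_n} δ_{gσ}` for `g ∈ S_α ⊆ S_{α+n}`. -/
def aElt (α n : ℕ) (g : Perm (Fin α)) : MonoidAlgebra ℂ (Perm (Fin (α + n))) :=
  ((Nat.factorial n : ℂ))⁻¹ • ∑ σ ∈ (Set.toFinite (fixFirst α n : Set (Perm (Fin (α + n))))).toFinset,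
    MonoidAlgebra.single (Perm.viaFintypeEmbedding g (Fin.castAddEmb n) * σ) 1

/-- The unit `(1/n!)·Σ_{k ∈ S_n} δ_k` of the double coset algebra. -/
def unitK (α n : ℕ) : MonoidAlgebra ℂ (Perm (Fin (α + n))) :=
  ((Nat.factorial n : ℂ))⁻¹ • ∑ σ ∈ (Set.toFinite (fixFirst α n : Set (Perm (Fin (α + n))))).toFinset,
    MonoidAlgebra.single σ 1

end


noncomputable section Aux

abbrev KF (α n : ℕ) : Finset (Perm (Fin (α + n))) :=
  (Set.toFinite (fixFirst α n : Set (Perm (Fin (α + n))))).toFinset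

variable {α n : ℕ}

lemma mem_fix {k : Perm (Fin (α + n))} :
    k ∈ fixFirst α n ↔ ∀ x : Fin (α + n), (x : ℕ) < α → k x = x := by
  simp [fixFirst, mem_fixingSubgroup_iff, Perm.smul_def]

lemma mem_KF {k : Perm (Fin (α + n))} :
    k ∈ KF α n ↔ ∀ x : Fin (α + n), (x : ℕ) < α → k x = x := by
  rw [KF, Set.Finite.mem_toFinset, SetLike.mem_coe, mem_fix]

lemma apply_ge {k : Perm (Fin (α + n))} (hk : ∀ x : Fin (α + n), (x : ℕ) < α → k x = x)
    {x : Fin (α + n)} (hx : α ≤ (x : ℕ)) : α ≤ (k x : ℕ) := by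
  by_contra h
  push_neg at h
  have h1 : k (k x) = k x := hk _ h
  have := k.injective h1
  omega

lemma KF_apply_ge {k : Perm (Fin (α + n))} (hk : k ∈ KF α n) {x : Fin (α + n)}
    (hx : α ≤ (x : ℕ)) : α ≤ (k x : ℕ) :=
  apply_ge (mem_KF.mp hk) hx

def bigEquiv : {x : Fin (α + n) // α ≤ (x : ℕ)} ≃ Fin n where
  toFun x := ⟨(x : ℕ) - α, by have := x.1.2; have := x.2; omega⟩
  invFun j := ⟨⟨α + j, by omega⟩, by simp⟩
  left_inv x := by ext; have := x.2; simp; omega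
  right_inv j := by ext; simp

lemma card_KF : (KF α n).card = n.factorial := by
  classical
  rw [← Fintype.card_coe]
  have e1 : {x // x ∈ KF α n} ≃
      {f : Perm (Fin (α + n)) // ∀ a : Fin (α + n), ¬ (α ≤ (a : ℕ)) → f a = a} :=
    (Equiv.refl _).subtypeEquiv (fun f => by
      rw [mem_KF]
      exact ⟨fun h a ha => h a (by omega), fun h a ha => h a (by omega)⟩)
  have e2 := (Equiv.Perm.subtypeEquivSubtypePerm (fun x : Fin (α + n) => α ≤ (x : ℕ))).symm
  rw [Fintype.card_congr (e1.trans e2), Fintype.card_perm, Fintype.card_congr bigEquiv,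
    Fintype.card_fin]

abbrev Bf (α n : ℕ) : Finset (Fin (α + n)) := Finset.filter (fun x => α ≤ (x : ℕ)) Finset.univ

lemma card_Bf : (Bf α n).card = n := by
  classical
  rw [← Fintype.card_subtype, Fintype.card_congr bigEquiv, Fintype.card_fin]

variable {ii aa : Fin (α + n)}

lemma swap_big_small {b x : Fin (α + n)} (hb : α ≤ (b : ℕ))
    (hx : (x : ℕ) < α) (hxi : x ≠ ii) : Equiv.swap ii b x = x :=
  swap_apply_of_ne_of_ne hxi (Fin.ne_of_val_ne (by omega))

/-- Characterization of the double coset. -/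
lemma mem_dcos_iff (hii : (ii : ℕ) < α) (haa : α ≤ (aa : ℕ)) {h : Perm (Fin (α + n))} :
    h ∈ dcos α n (Equiv.swap ii aa) ↔
      (∀ x : Fin (α + n), (x : ℕ) < α → x ≠ ii → h x = x) ∧ α ≤ ((h ii) : ℕ) := by
  rw [dcos, Set.Finite.mem_toFinset, Set.mem_setOf_eq]
  constructor
  · rintro ⟨k₁, hk₁, k₂, hk₂, rfl⟩
    rw [mem_fix] at hk₁ hk₂
    constructor
    · intro x hx hxi
      simp only [Perm.mul_apply]
      rw [hk₂ x hx, swap_big_small haa hx hxi, hk₁ x hx]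
    · simp only [Perm.mul_apply]
      rw [hk₂ ii hii, swap_apply_left]
      exact apply_ge hk₁ haa
  · rintro ⟨hfix, hbig⟩
    set b := h ii with hb
    refine ⟨Equiv.swap aa b, ?_, (Equiv.swap ii aa * Equiv.swap aa b * Equiv.swap ii b) *
      (Equiv.swap ii b * h), ?_, ?_⟩
    · rw [mem_fix]
      intro x hx
      exact swap_apply_of_ne_of_ne (Fin.ne_of_val_ne (by omega)) (Fin.ne_of_val_ne (by omega))
    · rw [mem_fix]
      intro x hx
      rcases eq_or_ne x ii with rfl | hxi
      · simp only [Perm.mul_apply, ← hb, swap_apply_left, swap_apply_right]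
      · have e1 : Equiv.swap ii b x = x := swap_big_small hbig hx hxi
        have e2 : Equiv.swap aa b x = x :=
          swap_apply_of_ne_of_ne (Fin.ne_of_val_ne (by omega)) (Fin.ne_of_val_ne (by omega))
        have e3 : Equiv.swap ii aa x = x := swap_big_small haa hx hxi
        simp only [Perm.mul_apply]
        rw [hfix x hx hxi, e1, e1, e2, e3]
    · simp [mul_assoc, swap_mul_self_mul]

lemma inv_apply_big (hii : (ii : ℕ) < α)
    {h : Perm (Fin (α + n))}
    (hfix : ∀ x : Fin (α + n), (x : ℕ) < α → x ≠ ii → h x = x) (hbig : α ≤ ((h ii) : ℕ)) :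
    α ≤ ((h⁻¹ ii) : ℕ) := by
  by_contra hcon
  push_neg at hcon
  rcases eq_or_ne (h⁻¹ ii) ii with e | e
  · have : h ii = ii := by
      conv_lhs => rw [← e]
      exact h.apply_symm_apply ii
    omega
  · have h1 : h (h⁻¹ ii) = h⁻¹ ii := hfix _ hcon e
    rw [(by simp : ∀ y, h (h⁻¹ y) = y)] at h1
    exact e h1.symm

end Aux

section Sums
variable {α n : ℕ} {ii aa : Fin (α + n)}

lemma KF_fix_ii (hii : (ii : ℕ) < α) {k : Perm (Fin (α + n))} (hk : k ∈ KF α n) : k ii = ii :=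
  mem_KF.mp hk ii hii

/-- Left coset decomposition of the double coset. -/
lemma sumD_left (hii : (ii : ℕ) < α) (haa : α ≤ (aa : ℕ)) :
    ∑ h ∈ dcos α n (Equiv.swap ii aa), MonoidAlgebra.single h (1 : ℂ) =
      ∑ p ∈ Bf α n ×ˢ KF α n, MonoidAlgebra.single (Equiv.swap ii p.1 * p.2) (1 : ℂ) := by
  apply Finset.sum_nbij' (fun h => (h ii, Equiv.swap ii (h ii) * h))
    (fun p => Equiv.swap ii p.1 * p.2)
  · intro h hh
    rw [mem_dcos_iff hii haa] at hh
    obtain ⟨hfix, hbig⟩ := hh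
    rw [Finset.mem_product, Finset.mem_filter, mem_KF]
    refine ⟨⟨Finset.mem_univ _, hbig⟩, ?_⟩
    intro x hx
    rcases eq_or_ne x ii with rfl | hxi
    · simp [Perm.mul_apply, swap_apply_right]
    · simp only [Perm.mul_apply]
      rw [hfix x hx hxi, swap_big_small hbig hx hxi]
  · intro p hp
    rw [Finset.mem_product, Finset.mem_filter] at hp
    obtain ⟨⟨-, hb⟩, hk⟩ := hp
    rw [mem_dcos_iff hii haa]
    constructor
    · intro x hx hxi
      simp only [Perm.mul_apply]
      rw [mem_KF.mp hk x hx, swap_big_small hb hx hxi]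
    · simp only [Perm.mul_apply]
      rw [KF_fix_ii hii hk, swap_apply_left]
      exact hb
  · intro h hh
    simp [swap_mul_self_mul]
  · intro p hp
    rw [Finset.mem_product, Finset.mem_filter] at hp
    obtain ⟨⟨-, hb⟩, hk⟩ := hp
    have e1 : (Equiv.swap ii p.1 * p.2) ii = p.1 := by
      simp only [Perm.mul_apply]
      rw [KF_fix_ii hii hk, swap_apply_left]
    rw [Prod.ext_iff]
    refine ⟨e1, ?_⟩
    simp only [e1]
    simp [swap_mul_self_mul]
  · intro h hh
    rw [swap_mul_self_mul]

/-- Right coset decomposition of the double coset. -/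
lemma sumD_right (hii : (ii : ℕ) < α) (haa : α ≤ (aa : ℕ)) :
    ∑ h ∈ dcos α n (Equiv.swap ii aa), MonoidAlgebra.single h (1 : ℂ) =
      ∑ p ∈ Bf α n ×ˢ KF α n, MonoidAlgebra.single (p.2 * Equiv.swap ii p.1) (1 : ℂ) := by
  apply Finset.sum_nbij' (fun h => (h⁻¹ ii, h * Equiv.swap ii (h⁻¹ ii)))
    (fun p => p.2 * Equiv.swap ii p.1)
  · intro h hh
    rw [mem_dcos_iff hii haa] at hh
    obtain ⟨hfix, hbig⟩ := hh
    have hc : α ≤ ((h⁻¹ ii) : ℕ) := inv_apply_big hii hfix hbig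
    rw [Finset.mem_product, Finset.mem_filter, mem_KF]
    refine ⟨⟨Finset.mem_univ _, hc⟩, ?_⟩
    intro x hx
    rcases eq_or_ne x ii with rfl | hxi
    · simp only [Perm.mul_apply]
      rw [swap_apply_left, (by simp : ∀ y, h (h⁻¹ y) = y)]
    · simp only [Perm.mul_apply]
      rw [swap_big_small hc hx hxi, hfix x hx hxi]
  · intro p hp
    rw [Finset.mem_product, Finset.mem_filter] at hp
    obtain ⟨⟨-, hb⟩, hk⟩ := hp
    rw [mem_dcos_iff hii haa]
    constructor
    · intro x hx hxi
      simp only [Perm.mul_apply]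
      rw [swap_big_small hb hx hxi, mem_KF.mp hk x hx]
    · simp only [Perm.mul_apply]
      rw [swap_apply_left]
      exact KF_apply_ge hk hb
  · intro h hh
    simp [mul_swap_mul_self, mul_assoc]
  · intro p hp
    rw [Finset.mem_product, Finset.mem_filter] at hp
    obtain ⟨⟨-, hb⟩, hk⟩ := hp
    have e1 : (p.2 * Equiv.swap ii p.1)⁻¹ ii = p.1 := by
      rw [mul_inv_rev, Perm.mul_apply, swap_inv]
      have : p.2⁻¹ ii = ii := by
        have := KF_fix_ii hii hk
        rw [← this, (by simp : ∀ y, p.2⁻¹ (p.2 y) = y), this]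
      rw [this, swap_apply_left]
    rw [Prod.ext_iff]
    refine ⟨e1, ?_⟩
    simp only [e1]
    simp [mul_swap_mul_self, mul_assoc, swap_mul_self, mul_one]
  · intro h hh
    rw [mul_assoc, swap_mul_self, mul_one]

end Sums

section Split
variable {α n : ℕ} {ii aa : Fin (α + n)}

/-- Part 1: triples with `m c = b` biject onto `KF × Bf`. -/
lemma total1 (hii : (ii : ℕ) < α) :
    ∑ r ∈ (Bf α n ×ˢ (Bf α n ×ˢ KF α n)).filter (fun r => r.2.2 r.2.1 = r.1),
        MonoidAlgebra.single (Equiv.swap ii r.1 * (r.2.2 * Equiv.swap ii r.2.1)) (1 : ℂ) =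
      ∑ u ∈ KF α n ×ˢ Bf α n, MonoidAlgebra.single u.1 (1 : ℂ) := by
  apply Finset.sum_nbij'
    (fun r => (Equiv.swap ii r.1 * (r.2.2 * Equiv.swap ii r.2.1), r.2.1))
    (fun u => (u.1 u.2, (u.2, Equiv.swap ii (u.1 u.2) * (u.1 * Equiv.swap ii u.2))))
  · rintro ⟨b, c, m⟩ hr
    simp only [Finset.mem_filter, Finset.mem_product, Finset.mem_filter] at hr
    obtain ⟨⟨⟨-, hb⟩, ⟨-, hc⟩, hm⟩, hP⟩ := hr
    simp only [Finset.mem_product, Finset.mem_filter]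
    refine ⟨mem_KF.mpr ?_, Finset.mem_univ _, hc⟩
    intro x hx
    rcases eq_or_ne x ii with rfl | hxi
    · simp only [Perm.mul_apply]
      rw [swap_apply_left, hP, swap_apply_right]
    · simp only [Perm.mul_apply]
      rw [swap_big_small hc hx hxi, mem_KF.mp hm x hx, swap_big_small hb hx hxi]
  · rintro ⟨h, c⟩ hu
    simp only [Finset.mem_product, Finset.mem_filter] at hu
    obtain ⟨hh, -, hc⟩ := hu
    have hb : α ≤ ((h c : Fin (α + n))) := KF_apply_ge hh hc
    simp only [Finset.mem_filter, Finset.mem_product, Finset.mem_filter]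
    have hfi : h ii = ii := KF_fix_ii hii hh
    refine ⟨⟨⟨Finset.mem_univ _, hb⟩, ⟨Finset.mem_univ _, hc⟩, mem_KF.mpr ?_⟩, ?_⟩
    · intro x hx
      rcases eq_or_ne x ii with rfl | hxi
      · simp only [Perm.mul_apply]
        rw [swap_apply_left, swap_apply_right]
      · simp only [Perm.mul_apply]
        rw [swap_big_small hc hx hxi, mem_KF.mp hh x hx, swap_big_small hb hx hxi]
    · simp only [Perm.mul_apply]
      rw [swap_apply_right, hfi, swap_apply_left]
  · rintro ⟨b, c, m⟩ hr
    simp only [Finset.mem_filter, Finset.mem_product, Finset.mem_filter] at hr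
    obtain ⟨⟨⟨-, hb⟩, ⟨-, hc⟩, hm⟩, hP⟩ := hr
    have e1 : (Equiv.swap ii b * (m * Equiv.swap ii c)) c = b := by
      simp only [Perm.mul_apply]
      rw [swap_apply_right, KF_fix_ii hii hm, swap_apply_left]
    simp only [Prod.mk.injEq]
    refine ⟨e1, trivial, ?_⟩
    rw [e1]
    simp [mul_assoc, swap_mul_self, mul_one, swap_mul_self_mul]
  · rintro ⟨h, c⟩ hu
    simp only [Finset.mem_product, Finset.mem_filter] at hu
    obtain ⟨hh, -, hc⟩ := hu
    simp only [Prod.mk.injEq]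
    refine ⟨?_, trivial⟩
    simp [mul_assoc, swap_mul_self, mul_one, swap_mul_self_mul]
  · rintro ⟨b, c, m⟩ hr
    rfl

/-- Part 2: triples with `m c ≠ b` biject onto pairs `(h, c)` with `h ∈ D`, `h c ≠ ii`. -/
lemma total2 (hii : (ii : ℕ) < α) (haa : α ≤ (aa : ℕ)) :
    ∑ r ∈ (Bf α n ×ˢ (Bf α n ×ˢ KF α n)).filter (fun r => ¬ (r.2.2 r.2.1 = r.1)),
        MonoidAlgebra.single (Equiv.swap ii r.1 * (r.2.2 * Equiv.swap ii r.2.1)) (1 : ℂ) =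
      ∑ u ∈ (dcos α n (Equiv.swap ii aa) ×ˢ Bf α n).filter (fun u => u.1 u.2 ≠ ii),
        MonoidAlgebra.single u.1 (1 : ℂ) := by
  apply Finset.sum_nbij'
    (fun r => (Equiv.swap ii r.1 * (r.2.2 * Equiv.swap ii r.2.1), r.2.1))
    (fun u => (u.1 u.2, (u.2, Equiv.swap ii (u.1 u.2) * (u.1 * Equiv.swap ii u.2))))
  · rintro ⟨b, c, m⟩ hr
    simp only [Finset.mem_filter, Finset.mem_product, Finset.mem_filter] at hr
    obtain ⟨⟨⟨-, hb⟩, ⟨-, hc⟩, hm⟩, hP⟩ := hr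
    have hmc : α ≤ ((m c : Fin (α + n))) := KF_apply_ge hm hc
    simp only [Finset.mem_filter, Finset.mem_product]
    have e1 : (Equiv.swap ii b * (m * Equiv.swap ii c)) c = b := by
      simp only [Perm.mul_apply]
      rw [swap_apply_right, KF_fix_ii hii hm, swap_apply_left]
    refine ⟨⟨(mem_dcos_iff hii haa).mpr ⟨?_, ?_⟩, Finset.mem_univ _, hc⟩, ?_⟩
    · intro x hx hxi
      simp only [Perm.mul_apply]
      rw [swap_big_small hc hx hxi, mem_KF.mp hm x hx, swap_big_small hb hx hxi]
    · simp only [Perm.mul_apply]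
      rw [swap_apply_left]
      have : Equiv.swap ii b (m c) = m c :=
        swap_apply_of_ne_of_ne (Fin.ne_of_val_ne (by omega)) hP
      rw [this]
      exact hmc
    · rw [e1]
      exact Fin.ne_of_val_ne (by omega)
  · rintro ⟨h, c⟩ hu
    simp only [Finset.mem_filter, Finset.mem_product] at hu
    obtain ⟨⟨hh, -, hc⟩, hQ⟩ := hu
    rw [mem_dcos_iff hii haa] at hh
    obtain ⟨hfix, hbig⟩ := hh
    have hb : α ≤ ((h c : Fin (α + n))) := by
      by_contra hcon
      push_neg at hcon
      have h1 : h (h c) = h c := hfix _ hcon hQ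
      have := h.injective h1
      omega
    simp only [Finset.mem_filter, Finset.mem_product, Finset.mem_filter]
    refine ⟨⟨⟨Finset.mem_univ _, hb⟩, ⟨Finset.mem_univ _, hc⟩, mem_KF.mpr ?_⟩, ?_⟩
    · intro x hx
      rcases eq_or_ne x ii with rfl | hxi
      · simp only [Perm.mul_apply]
        rw [swap_apply_left, swap_apply_right]
      · simp only [Perm.mul_apply]
        rw [swap_big_small hc hx hxi, hfix x hx hxi, swap_big_small hb hx hxi]
    · simp only [Perm.mul_apply]
      rw [swap_apply_right]
      rcases eq_or_ne (h ii) (h c) with e | e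
      · rw [e, swap_apply_right]
        exact Fin.ne_of_val_ne (by omega)
      · have : Equiv.swap ii (h c) (h ii) = h ii :=
          swap_apply_of_ne_of_ne (Fin.ne_of_val_ne (by omega)) e
        rw [this]
        exact e
  · rintro ⟨b, c, m⟩ hr
    simp only [Finset.mem_filter, Finset.mem_product, Finset.mem_filter] at hr
    obtain ⟨⟨⟨-, hb⟩, ⟨-, hc⟩, hm⟩, hP⟩ := hr
    have e1 : (Equiv.swap ii b * (m * Equiv.swap ii c)) c = b := by
      simp only [Perm.mul_apply]
      rw [swap_apply_right, KF_fix_ii hii hm, swap_apply_left]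
    simp only [Prod.mk.injEq]
    refine ⟨e1, trivial, ?_⟩
    rw [e1]
    simp [mul_assoc, swap_mul_self, mul_one, swap_mul_self_mul]
  · rintro ⟨h, c⟩ hu
    simp only [Prod.mk.injEq]
    refine ⟨?_, trivial⟩
    simp [mul_assoc, swap_mul_self, mul_one, swap_mul_self_mul]
  · rintro ⟨b, c, m⟩ hr
    rfl

end Split

section Final
variable {α n : ℕ}

lemma KF_mul {k k' : Perm (Fin (α + n))} (hk : k ∈ KF α n) (hk' : k' ∈ KF α n) :
    k * k' ∈ KF α n := by
  rw [mem_KF] at *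
  intro x hx
  rw [Perm.mul_apply, hk' x hx, hk x hx]

lemma KF_inv {k : Perm (Fin (α + n))} (hk : k ∈ KF α n) : k⁻¹ ∈ KF α n := by
  rw [mem_KF] at *
  intro x hx
  conv_lhs => rw [← hk x hx]
  exact k.symm_apply_apply x

end Final


/-- In `C[S_n\S_{α+n}/S_n]`, the element `θ_i` satisfies
`θ_i² = (n−1)·θ_i + n·1`, where `1` is the unit `(1/n!)Σ_{k∈S_n} δ_k`. -/
theorem theta_sq (α n : ℕ) (hn : 0 < n) (i : Fin α) :
    theta α n hn i * theta α n hn i =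
      ((n : ℂ) - 1) • theta α n hn i + (n : ℂ) • unitK α n := by
  classical
  set ii : Fin (α + n) := Fin.castAdd n i with hiidef
  set aa : Fin (α + n) := (⟨α, by omega⟩ : Fin (α + n)) with haadef
  have hii : (ii : ℕ) < α := by simpa [hiidef] using i.2
  have haa : α ≤ (aa : ℕ) := le_of_eq rfl
  set cn : ℂ := (n.factorial : ℂ) with hcn
  have hcn0 : cn ≠ 0 := Nat.cast_ne_zero.mpr n.factorial_ne_zero
  set SD := ∑ h ∈ dcos α n (Equiv.swap ii aa), MonoidAlgebra.single h (1 : ℂ) with hSD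
  set SK := ∑ k ∈ KF α n, MonoidAlgebra.single k (1 : ℂ) with hSK
  have hθ : theta α n hn i = cn⁻¹ • SD := rfl
  have hU : unitK α n = cn⁻¹ • SK := rfl
  set A := ∑ p ∈ Bf α n ×ˢ KF α n,
    MonoidAlgebra.single (Equiv.swap ii p.1 * p.2) (1 : ℂ) with hAdef
  set B := ∑ p ∈ Bf α n ×ˢ KF α n,
    MonoidAlgebra.single (p.2 * Equiv.swap ii p.1) (1 : ℂ) with hBdef
  have hA : SD = A := sumD_left hii haa
  have hB : SD = B := sumD_right hii haa
  have hAB : SD * SD = A * B := by rw [← hA, ← hB]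
  -- expand the product
  have e1 : A * B = ∑ p ∈ Bf α n ×ˢ KF α n, ∑ q ∈ Bf α n ×ˢ KF α n,
      MonoidAlgebra.single (Equiv.swap ii p.1 * p.2 * (q.2 * Equiv.swap ii q.1)) (1 : ℂ) := by
    rw [hAdef, hBdef, Finset.sum_mul_sum]
    refine Finset.sum_congr rfl fun p _ => Finset.sum_congr rfl fun q _ => ?_
    rw [MonoidAlgebra.single_mul_single, one_mul]
  -- absorb the middle K-factor
  have e2 : ∀ p ∈ Bf α n ×ˢ KF α n,
      (∑ q ∈ Bf α n ×ˢ KF α n,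
        MonoidAlgebra.single (Equiv.swap ii p.1 * p.2 * (q.2 * Equiv.swap ii q.1)) (1 : ℂ)) =
      ∑ q ∈ Bf α n ×ˢ KF α n,
        MonoidAlgebra.single (Equiv.swap ii p.1 * (q.2 * Equiv.swap ii q.1)) (1 : ℂ) := by
    intro p hp
    rw [Finset.mem_product] at hp
    apply Finset.sum_nbij' (fun q => (q.1, p.2 * q.2)) (fun q => (q.1, p.2⁻¹ * q.2))
    · rintro ⟨c, m⟩ hq
      rw [Finset.mem_product] at hq ⊢
      exact ⟨hq.1, KF_mul hp.2 hq.2⟩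
    · rintro ⟨c, m⟩ hq
      rw [Finset.mem_product] at hq ⊢
      exact ⟨hq.1, KF_mul (KF_inv hp.2) hq.2⟩
    · rintro ⟨c, m⟩ hq
      simp [inv_mul_cancel_left]
    · rintro ⟨c, m⟩ hq
      simp [mul_inv_cancel_left]
    · rintro ⟨c, m⟩ hq
      have : Equiv.swap ii p.1 * p.2 * (m * Equiv.swap ii c) =
          Equiv.swap ii p.1 * (p.2 * m * Equiv.swap ii c) := by
        simp [mul_assoc]
      rw [this]
  -- collapse the outer K-sum
  have e3 : A * B = n.factorial •
      ∑ r ∈ Bf α n ×ˢ (Bf α n ×ˢ KF α n),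
        MonoidAlgebra.single (Equiv.swap ii r.1 * (r.2.2 * Equiv.swap ii r.2.1)) (1 : ℂ) := by
    rw [e1, Finset.sum_congr rfl e2, Finset.sum_product]
    simp only [Finset.sum_const, card_KF]
    rw [← Finset.smul_sum]
    congr 1
    rw [Finset.sum_product]
  -- split into the two parts
  have e4 : ∑ r ∈ Bf α n ×ˢ (Bf α n ×ˢ KF α n),
        MonoidAlgebra.single (Equiv.swap ii r.1 * (r.2.2 * Equiv.swap ii r.2.1)) (1 : ℂ) =
      n • SK + (n - 1) • SD := by
    rw [← Finset.sum_filter_add_sum_filter_not (Bf α n ×ˢ (Bf α n ×ˢ KF α n))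
      (fun r => r.2.2 r.2.1 = r.1), total1 hii, total2 hii haa]
    congr 1
    · rw [Finset.sum_product]
      simp only [Finset.sum_const, ← Finset.smul_sum, card_Bf]
      rfl
    · rw [Finset.sum_filter, Finset.sum_product, hSD, Finset.smul_sum]
      refine Finset.sum_congr rfl fun h hh => ?_
      rw [← Finset.sum_filter]
      rw [mem_dcos_iff hii haa] at hh
      obtain ⟨hfix, hbig⟩ := hh
      have hinv : h⁻¹ ii ∈ Bf α n :=
        Finset.mem_filter.mpr ⟨Finset.mem_univ _, inv_apply_big hii hfix hbig⟩
      have hfe : (Bf α n).filter (fun c => h c ≠ ii) = (Bf α n).erase (h⁻¹ ii) := by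
        ext c
        rw [Finset.mem_filter, Finset.mem_erase]
        constructor
        · rintro ⟨hc, hell⟩
          refine ⟨fun e => hell ?_, hc⟩
          rw [e, (by simp : ∀ y, h (h⁻¹ y) = y)]
        · rintro ⟨hne, hc⟩
          refine ⟨hc, fun e => hne ?_⟩
          rw [← e, (by simp : ∀ y, h⁻¹ (h y) = y)]
      rw [hfe]
      simp only [Finset.sum_const, Finset.card_erase_of_mem hinv, card_Bf]
  -- put everything together
  rw [hθ, hU, smul_mul_smul_comm, hAB, e3, e4]
  rw [← Nat.cast_smul_eq_nsmul ℂ n.factorial, ← Nat.cast_smul_eq_nsmul ℂ n,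
    ← Nat.cast_smul_eq_nsmul ℂ (n - 1), Nat.cast_sub hn, Nat.cast_one]
  rw [smul_smul, ← hcn]
  have hco : cn⁻¹ * cn⁻¹ * cn = cn⁻¹ := by
    field_simp
  rw [hco]
  module
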